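/- arXiv:1006.2020 — 4 statements merged into one kernel-verified Lean document; each statement's English description precedes it below -/
import Mathlib

section
/- Let φ: ℝ² → ℝ be C¹ and strictly star-shaped, i.e. x·φ_x(x,y) + y·φ_y(x,y) > 0 for all (x,y) ≠ (0,0). Define A(x,y) = x² + y² + x·y·φ(x,y). Then the gradient of A does not vanish at any point of the set {(x,y) ≠ (0,0) : A(x,y) = 0}. -/
theorem grad_A_nonvanishing
    (φ : ℝ × ℝ → ℝ) (hφ : ContDiff ℝ 1 φ)
    (hstar : ∀ p : ℝ × ℝ, p ≠ 0 →
      p.1 * fderiv ℝ φ p (1, 0) + p.2 * fderiv ℝ φ p (0, 1) > 0)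
    (A : ℝ × ℝ → ℝ)
    (hA : ∀ p : ℝ × ℝ, A p = p.1 ^ 2 + p.2 ^ 2 + p.1 * p.2 * φ p) :
    ∀ p : ℝ × ℝ, p ≠ 0 → A p = 0 → fderiv ℝ A p ≠ 0 := by
  have hAeq : A = fun q : ℝ × ℝ => q.1 * q.1 + q.2 * q.2 + q.1 * q.2 * φ q :=
    funext fun q => by rw [hA]; ring
  intro p hp hA0 hgrad
  have hdφ : Differentiable ℝ φ := hφ.differentiable one_ne_zero
  set L := fderiv ℝ φ p with hL
  have hφ' : HasFDerivAt φ L p := (hdφ p).hasFDerivAt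
  have hx : HasFDerivAt (fun q : ℝ × ℝ => q.1)
      (ContinuousLinearMap.fst ℝ ℝ ℝ) p := hasFDerivAt_fst
  have hy : HasFDerivAt (fun q : ℝ × ℝ => q.2)
      (ContinuousLinearMap.snd ℝ ℝ ℝ) p := hasFDerivAt_snd
  have hDA := ((hx.mul hx).add (hy.mul hy)).add ((hx.mul hy).mul hφ')
  change HasFDerivAt (fun q : ℝ × ℝ => q.1 * q.1 + q.2 * q.2 + q.1 * q.2 * φ q) _ p at hDA
  rw [← hAeq] at hDA
  have hfd := hDA.fderiv
  have hval : fderiv ℝ A p p = 0 := by rw [hgrad]; rfl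
  rw [hfd] at hval
  simp only [ContinuousLinearMap.add_apply, ContinuousLinearMap.smul_apply,
    ContinuousLinearMap.coe_fst', ContinuousLinearMap.coe_snd', smul_eq_mul, Pi.mul_apply] at hval
  -- L p = p.1 * L (1,0) + p.2 * L (0,1)
  have hLp : L p = p.1 * L (1, 0) + p.2 * L (0, 1) := by
    have hpe : p = p.1 • ((1 : ℝ), (0 : ℝ)) + p.2 • ((0 : ℝ), (1 : ℝ)) := by
      ext <;> simp
    conv_lhs => rw [hpe]
    rw [map_add, map_smul, map_smul, smul_eq_mul, smul_eq_mul]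
  have hA0' : p.1 ^ 2 + p.2 ^ 2 + p.1 * p.2 * φ p = 0 := by rw [← hA p]; exact hA0
  have hx0 : p.1 ≠ 0 := by
    intro h
    have h2 : p.2 ^ 2 = 0 := by rw [h] at hA0'; linarith
    have hy0 : p.2 = 0 := by
      exact pow_eq_zero_iff (by norm_num) |>.mp h2
    exact hp (Prod.ext h hy0)
  have hy0 : p.2 ≠ 0 := by
    intro h
    have h2 : p.1 ^ 2 = 0 := by rw [h] at hA0'; linarith
    have hx0 : p.1 = 0 := by
      exact pow_eq_zero_iff (by norm_num) |>.mp h2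
    exact hp (Prod.ext hx0 h)
  have hS : p.1 * L (1, 0) + p.2 * L (0, 1) > 0 := hstar p hp
  have hkey : p.1 * p.2 * (p.1 * L (1, 0) + p.2 * L (0, 1)) = 0 := by
    rw [hLp] at hval
    linear_combination hval - 2 * hA0'
  exact (mul_ne_zero (mul_ne_zero hx0 hy0) (ne_of_gt hS)) hkey
end

section
/- Let φ: ℝ² → ℝ be C¹ with x·φ_x + y·φ_y > 0 for (x,y) ≠ (0,0), and A(x,y) = x² + y² + x·y·φ(x,y). If (x*,y*) satisfies x* > 0, y* < 0 and A(x*,y*) < 0, then the function r ↦ A(r x*, r y*) is strictly decreasing on [1,∞). -/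
theorem A_radially_decreasing_fourth_quadrant
    (φ : ℝ × ℝ → ℝ) (hφ : ContDiff ℝ 1 φ)
    (hstar : ∀ p : ℝ × ℝ, p ≠ 0 →
      p.1 * fderiv ℝ φ p (1, 0) + p.2 * fderiv ℝ φ p (0, 1) > 0)
    (A : ℝ × ℝ → ℝ)
    (hA : ∀ p : ℝ × ℝ, A p = p.1 ^ 2 + p.2 ^ 2 + p.1 * p.2 * φ p)
    (x y : ℝ) (hx : 0 < x) (hy : y < 0) (hA0 : A (x, y) < 0) :
    StrictAntiOn (fun r : ℝ => A (r * x, r * y)) (Set.Ici 1) := by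
  set h : ℝ → ℝ := fun r => φ (r * x, r * y) with hh
  have hdiff : Differentiable ℝ φ := hφ.differentiable one_ne_zero
  have hderiv : ∀ r : ℝ, HasDerivAt h (fderiv ℝ φ ((r*x, r*y) : ℝ × ℝ) (x, y)) r := by
    intro r
    have h1 : HasDerivAt (fun r : ℝ => ((r * x, r * y) : ℝ × ℝ)) (x, y) r := by
      simpa using HasDerivAt.prodMk ((hasDerivAt_id r).mul_const x) ((hasDerivAt_id r).mul_const y)
    exact ((hdiff (r*x, r*y)).hasFDerivAt).comp_hasDerivAt r h1
  have hmono : StrictMonoOn h (Set.Ici 1) := by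
    apply strictMonoOn_of_deriv_pos (convex_Ici 1)
    · exact (hφ.continuous.comp (by continuity)).continuousOn
    · intro r hr
      rw [interior_Ici] at hr
      have hr0 : (0:ℝ) < r := lt_trans one_pos hr
      rw [(hderiv r).deriv]
      have hne : ((r*x, r*y) : ℝ × ℝ) ≠ 0 := by
        intro h'
        have := congrArg Prod.fst h'
        simp at this
        rcases this with h1 | h2
        · exact absurd h1 (ne_of_gt hr0)
        · exact absurd h2 (ne_of_gt hx)
      have hst := hstar (r*x, r*y) hne
      have hlin : fderiv ℝ φ ((r*x, r*y) : ℝ × ℝ) (x, y)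
          = x * fderiv ℝ φ ((r*x, r*y) : ℝ × ℝ) (1, 0)
            + y * fderiv ℝ φ ((r*x, r*y) : ℝ × ℝ) (0, 1) := by
        have hxy : ((x, y) : ℝ × ℝ) = x • ((1:ℝ), (0:ℝ)) + y • ((0:ℝ), (1:ℝ)) := by
          simp [Prod.ext_iff]
        rw [hxy, map_add, map_smul, map_smul]
        simp [smul_eq_mul]
      rw [hlin]
      simp only at hst
      nlinarith [hst]
  intro a ha b hb hab
  simp only
  rw [hA (a*x, a*y), hA (b*x, b*y)]
  simp only
  have h1a : h 1 ≤ h a := hmono.monotoneOn (Set.self_mem_Ici) ha ha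
  have hab' : h a < h b := hmono ha hb hab
  have hA1 : x^2 + y^2 + x*y*(h 1) < 0 := by
    have := hA (x, y)
    simp only [hh, one_mul]
    simp only at this
    linarith [hA0, this.symm.le, this.le]
  have ha1 : (1:ℝ) ≤ a := ha
  have hb1 : (1:ℝ) ≤ b := hb
  have hb0 : (0:ℝ) < b := lt_of_lt_of_le one_pos hb1
  have hP : x * y < 0 := mul_neg_of_pos_of_neg hx hy
  simp only [hh, one_mul] at hab' h1a hA1
  have hφab : x * y * φ (b * x, b * y) < x * y * φ (a * x, a * y) := by nlinarith
  have hneg : x ^ 2 + y ^ 2 + x * y * φ (a * x, a * y) < 0 := by nlinarith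
  nlinarith [mul_lt_mul_of_pos_left hφab (mul_pos hb0 hb0),
    mul_nonpos_of_nonneg_of_nonpos (show (0:ℝ) ≤ b ^ 2 - a ^ 2 by nlinarith) hneg.le]
end

section
/- Let g ∈ C¹(ℝ,ℝ) with x·g(x) > 0 for x ≠ 0 and g'(0) > 0, and set G(x) = ∫₀ˣ g(s) ds and α(x) = sign(x)·√(2G(x)). Then α is a strictly increasing C¹ bijection of ℝ onto its image with α'(x) = sign(x)·g(x)/√(2G(x)) for x ≠ 0 and α'(0) = √(g'(0)). -/
open Filter Topology

theorem conti_filippov_alpha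
    (g : ℝ → ℝ) (hg : ContDiff ℝ 1 g)
    (hsign : ∀ x : ℝ, x ≠ 0 → 0 < x * g x)
    (hg0 : 0 < deriv g 0)
    (G : ℝ → ℝ) (hG : ∀ x : ℝ, G x = ∫ s in (0 : ℝ)..x, g s)
    (α : ℝ → ℝ)
    (hα : ∀ x : ℝ, α x = Real.sign x * Real.sqrt (2 * G x)) :
    StrictMono α ∧ ContDiff ℝ 1 α ∧ Function.Injective α
      ∧ (∀ x : ℝ, x ≠ 0 →
          HasDerivAt α (Real.sign x * g x / Real.sqrt (2 * G x)) x)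
      ∧ HasDerivAt α (Real.sqrt (deriv g 0)) 0 := by
  have hgc : Continuous g := hg.continuous
  have hGdef : G = fun u => ∫ s in (0:ℝ)..u, g s := funext hG
  have hG' : ∀ x : ℝ, HasDerivAt G (g x) x := by
    intro x
    have := (hgc.integral_hasStrictDerivAt 0 x).hasDerivAt
    rw [hGdef]; exact this
  have hGc : Continuous G := by
    rw [continuous_iff_continuousAt]; exact fun x => (hG' x).continuousAt
  have gpos : ∀ x : ℝ, 0 < x → 0 < g x := by
    intro x hx; have := hsign x hx.ne'; nlinarith
  have gneg : ∀ x : ℝ, x < 0 → g x < 0 := by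
    intro x hx; have := hsign x hx.ne; nlinarith
  have g0 : g 0 = 0 := by
    have h1 : Tendsto g (𝓝[>] (0:ℝ)) (𝓝 (g 0)) :=
      (hgc.tendsto 0).mono_left nhdsWithin_le_nhds
    have h2 : Tendsto g (𝓝[<] (0:ℝ)) (𝓝 (g 0)) :=
      (hgc.tendsto 0).mono_left nhdsWithin_le_nhds
    have hge : 0 ≤ g 0 := ge_of_tendsto h1
      (eventually_nhdsWithin_of_forall fun x hx => (gpos x hx).le)
    have hle : g 0 ≤ 0 := le_of_tendsto h2
      (eventually_nhdsWithin_of_forall fun x hx => (gneg x hx).le)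
    linarith
  have G0 : G 0 = 0 := by rw [hG 0, intervalIntegral.integral_same]
  have Gpos : ∀ x : ℝ, x ≠ 0 → 0 < G x := by
    intro x hx
    rcases hx.lt_or_gt with h | h
    · have hpos : 0 < ∫ s in x..(0:ℝ), -g s := by
        apply intervalIntegral.intervalIntegral_pos_of_pos_on
          ((hgc.neg).intervalIntegrable x 0)
        · intro s hs; simpa using gneg s hs.2
        · exact h
      rw [intervalIntegral.integral_neg] at hpos
      rw [hG x, intervalIntegral.integral_symm]
      linarith
    · rw [hG x]
      apply intervalIntegral.intervalIntegral_pos_of_pos_on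
        (hgc.intervalIntegrable 0 x)
      · intro s hs; exact gpos s hs.1
      · exact h
  have sqrt_pos' : ∀ x : ℝ, x ≠ 0 → 0 < Real.sqrt (2 * G x) := fun x hx =>
    Real.sqrt_pos.mpr (by have := Gpos x hx; linarith)
  -- derivative away from 0
  have hderiv_ne : ∀ x : ℝ, x ≠ 0 →
      HasDerivAt α (Real.sign x * g x / Real.sqrt (2 * G x)) x := by
    intro x hx
    have h2G : HasDerivAt (fun y => 2 * G y) (2 * g x) x := (hG' x).const_mul 2
    have hne : 2 * G x ≠ 0 := by have := Gpos x hx; positivity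
    have hs : HasDerivAt (fun y => Real.sqrt (2 * G y))
        (2 * g x / (2 * Real.sqrt (2 * G x))) x := h2G.sqrt hne
    have hsne : Real.sqrt (2 * G x) ≠ 0 := (sqrt_pos' x hx).ne'
    rcases hx.lt_or_gt with h | h
    · have heq : α =ᶠ[𝓝 x] fun y => -Real.sqrt (2 * G y) := by
        filter_upwards [Iio_mem_nhds h] with y hy
        rw [hα y, Real.sign_of_neg hy]; ring
      have hval : Real.sign x * g x / Real.sqrt (2 * G x)
          = -(2 * g x / (2 * Real.sqrt (2 * G x))) := by
        rw [Real.sign_of_neg h]; field_simp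
      rw [hval]
      exact hs.neg.congr_of_eventuallyEq heq
    · have heq : α =ᶠ[𝓝 x] fun y => Real.sqrt (2 * G y) := by
        filter_upwards [Ioi_mem_nhds h] with y hy
        rw [hα y, Real.sign_of_pos hy]; ring
      have hval : Real.sign x * g x / Real.sqrt (2 * G x)
          = 2 * g x / (2 * Real.sqrt (2 * G x)) := by
        rw [Real.sign_of_pos h]; field_simp
      rw [hval]
      exact hs.congr_of_eventuallyEq heq
  have α0 : α 0 = 0 := by rw [hα 0, Real.sign_zero, zero_mul]
  set d : ℝ := deriv g 0 with hd
  have hgd : HasDerivAt g d 0 := (hg.differentiable one_ne_zero 0).hasDerivAt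
  have slope_g : Tendsto (fun x => g x / x) (𝓝[≠] (0:ℝ)) (𝓝 d) := by
    have := hasDerivAt_iff_tendsto_slope.mp hgd
    refine this.congr' ?_
    filter_upwards [self_mem_nhdsWithin] with x hx
    simp [slope_def_field, g0]
  -- 2 G x / x ^ 2 → d by L'Hôpital
  have h2Gx2 : Tendsto (fun x => 2 * G x / x ^ 2) (𝓝[≠] (0:ℝ)) (𝓝 d) := by
    apply HasDerivAt.lhopital_zero_nhdsNE (f' := fun x => 2 * g x) (g' := fun x => 2 * x)
    · filter_upwards with x; exact (hG' x).const_mul 2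
    · filter_upwards with x
      simpa using (hasDerivAt_pow 2 x)
    · filter_upwards [self_mem_nhdsWithin] with x hx
      simpa using hx
    · have : Tendsto (fun x => 2 * G x) (𝓝 (0:ℝ)) (𝓝 (2 * G 0)) :=
        ((continuous_const.mul hGc).tendsto 0)
      rw [G0, mul_zero] at this
      exact this.mono_left nhdsWithin_le_nhds
    · have : Tendsto (fun x : ℝ => x ^ 2) (𝓝 (0:ℝ)) (𝓝 ((0:ℝ) ^ 2)) :=
        (continuous_pow 2).tendsto 0
      simpa using this.mono_left nhdsWithin_le_nhds
    · refine slope_g.congr ?_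
      intro x
      rw [mul_div_mul_left _ _ (two_ne_zero)]
  have key : ∀ x : ℝ, x ≠ 0 → α x / x = Real.sqrt (2 * G x / x ^ 2) := by
    intro x hx
    have h2 : (0:ℝ) ≤ 2 * G x := by have := Gpos x hx; linarith
    rw [hα x, Real.sqrt_div h2, Real.sqrt_sq_eq_abs]
    rcases hx.lt_or_gt with h | h
    · rw [Real.sign_of_neg h, abs_of_neg h]; ring
    · rw [Real.sign_of_pos h, abs_of_pos h]; ring
  have slope0 : Tendsto (fun x => α x / x) (𝓝[≠] (0:ℝ)) (𝓝 (Real.sqrt d)) := by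
    have := (Real.continuous_sqrt.tendsto d).comp h2Gx2
    refine this.congr' ?_
    filter_upwards [self_mem_nhdsWithin] with x hx
    exact (key x hx).symm
  have hderiv0 : HasDerivAt α (Real.sqrt d) 0 := by
    rw [hasDerivAt_iff_tendsto_slope]
    refine slope0.congr' ?_
    filter_upwards [self_mem_nhdsWithin] with x hx
    simp [slope_def_field, α0]
  -- the derivative function
  set α' : ℝ → ℝ := fun x =>
    if x = 0 then Real.sqrt d else Real.sign x * g x / Real.sqrt (2 * G x) with hα'
  have hαd : ∀ x : ℝ, HasDerivAt α (α' x) x := by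
    intro x
    by_cases hx : x = 0
    · subst hx; simpa [hα'] using hderiv0
    · simpa [hα', hx] using hderiv_ne x hx
  have hα'pos : ∀ x : ℝ, 0 < α' x := by
    intro x
    by_cases hx : x = 0
    · subst hx; simpa [hα'] using Real.sqrt_pos.mpr hg0
    · have h1 : 0 < Real.sign x * g x := by
        rcases Ne.lt_or_gt hx with h | h
        · rw [Real.sign_of_neg h]; have := gneg x h; nlinarith
        · rw [Real.sign_of_pos h]; simpa using gpos x h
      simp only [hα', if_neg hx]
      exact div_pos h1 (sqrt_pos' x hx)
  have hcontα' : Continuous α' := by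
    rw [continuous_iff_continuousAt]
    intro y
    by_cases hy : y = 0
    · subst hy
      unfold ContinuousAt
      rw [← nhdsNE_sup_pure, tendsto_sup]
      constructor
      · have hlim : Tendsto (fun x => (g x / x) / Real.sqrt (2 * G x / x ^ 2))
            (𝓝[≠] (0:ℝ)) (𝓝 (d / Real.sqrt d)) :=
          slope_g.div ((Real.continuous_sqrt.tendsto d).comp h2Gx2)
            (Real.sqrt_pos.mpr hg0).ne'
        rw [Real.div_sqrt] at hlim
        have : α' 0 = Real.sqrt d := by simp [hα']
        rw [this]
        refine hlim.congr' ?_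
        filter_upwards [self_mem_nhdsWithin] with x hx
        have h2 : (0:ℝ) ≤ 2 * G x := by have := Gpos x hx; linarith
        have hsne : Real.sqrt (2 * G x) ≠ 0 := (sqrt_pos' x hx).ne'
        rw [Real.sqrt_div h2, Real.sqrt_sq_eq_abs]
        have hx' : x ≠ 0 := hx
        simp only [hα', if_neg hx']
        rcases Ne.lt_or_gt hx' with h | h
        · rw [Real.sign_of_neg h, abs_of_neg h]
          field_simp [hx']
        · rw [Real.sign_of_pos h, abs_of_pos h]
          field_simp [hx']
      · have : α' 0 = Real.sqrt d := by simp [hα']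
        rw [this]
        have h1 : Tendsto α' (pure (0:ℝ)) (pure (α' 0)) := tendsto_pure_pure α' 0
        have : α' 0 = Real.sqrt d := by simp [hα']
        rw [this] at h1
        exact h1.mono_right (pure_le_nhds _)
    · have hct : ContinuousAt (fun x => Real.sign y * g x / Real.sqrt (2 * G x)) y := by
        apply ContinuousAt.div
        · exact (continuous_const.mul hgc).continuousAt
        · exact (Real.continuous_sqrt.comp (continuous_const.mul hGc)).continuousAt
        · exact (sqrt_pos' y hy).ne'
      refine hct.congr ?_
      rcases Ne.lt_or_gt hy with h | h
      · filter_upwards [Iio_mem_nhds h] with x hx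
        have hx' : x < 0 := hx
        simp only [hα', if_neg hx'.ne, Real.sign_of_neg hx', Real.sign_of_neg h]
      · filter_upwards [Ioi_mem_nhds h] with x hx
        have hx' : 0 < x := hx
        simp only [hα', if_neg hx'.ne', Real.sign_of_pos hx', Real.sign_of_pos h]
  have hderiv_eq : deriv α = α' := funext fun x => (hαd x).deriv
  have hmono : StrictMono α :=
    strictMono_of_deriv_pos (fun x => by rw [hderiv_eq]; exact hα'pos x)
  refine ⟨hmono, ?_, hmono.injective, hderiv_ne, hderiv0⟩
  rw [contDiff_one_iff_deriv]
  exact ⟨fun x => (hαd x).differentiableAt, by rw [hderiv_eq]; exact hcontα'⟩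
end

section
/- Let g ∈ C¹(ℝ,ℝ) with x g(x) > 0 for x ≠ 0 and g'(0) > 0, G(x) = ∫₀ˣ g, α(x) = sign(x)√(2G(x)), and β = α⁻¹. Then for u ≠ 0, β'(u) = u / g(β(u)), and lim_{u→0} g(β(u))/u = √(g'(0)) > 0. -/
open MeasureTheory intervalIntegral Filter Set

theorem conti_filippov_beta
    (g : ℝ → ℝ) (hg : ContDiff ℝ 1 g)
    (hsign : ∀ x : ℝ, x ≠ 0 → 0 < x * g x)
    (hg0 : 0 < deriv g 0)
    (G : ℝ → ℝ) (hG : ∀ x : ℝ, G x = ∫ s in (0 : ℝ)..x, g s)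
    (α : ℝ → ℝ)
    (hα : ∀ x : ℝ, α x = Real.sign x * Real.sqrt (2 * G x))
    (β : ℝ → ℝ)
    (hβα : ∀ x : ℝ, β (α x) = x)
    (hαβ : ∀ u ∈ Set.range α, α (β u) = u) :
    (∀ u ∈ Set.range α, u ≠ 0 → HasDerivAt β (u / g (β u)) u)
      ∧ Filter.Tendsto (fun u : ℝ => g (β u) / u)
          (nhdsWithin 0 {(0 : ℝ)}ᶜ) (nhds (Real.sqrt (deriv g 0)))
      ∧ 0 < Real.sqrt (deriv g 0) := by
  have hgc : Continuous g := hg.continuous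
  have hgint : ∀ a b : ℝ, IntervalIntegrable g volume a b :=
    fun a b => hgc.intervalIntegrable a b
  have hgpos : ∀ x : ℝ, 0 < x → 0 < g x := by
    intro x hx
    rcases mul_pos_iff.mp (hsign x hx.ne') with ⟨_, h⟩ | ⟨h, _⟩
    · exact h
    · linarith
  have hgneg : ∀ x : ℝ, x < 0 → g x < 0 := by
    intro x hx
    rcases mul_pos_iff.mp (hsign x hx.ne) with ⟨h, _⟩ | ⟨_, h⟩
    · linarith
    · exact h
  have hg00 : g 0 = 0 := by
    have h1 : (0:ℝ) ≤ g 0 := by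
      refine ge_of_tendsto ((hgc.tendsto 0).mono_left nhdsWithin_le_nhds :
        Tendsto g (nhdsWithin 0 (Set.Ioi 0)) (nhds (g 0))) ?_
      filter_upwards [self_mem_nhdsWithin] with x hx
      exact (hgpos x hx).le
    have h2 : g 0 ≤ 0 := by
      refine le_of_tendsto ((hgc.tendsto 0).mono_left nhdsWithin_le_nhds :
        Tendsto g (nhdsWithin 0 (Set.Iio 0)) (nhds (g 0))) ?_
      filter_upwards [self_mem_nhdsWithin] with x hx
      exact (hgneg x hx).le
    linarith
  have hGd : ∀ x : ℝ, HasDerivAt G (g x) x := by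
    have hGe : G = fun x => ∫ s in (0:ℝ)..x, g s := funext hG
    intro x
    rw [hGe]
    exact intervalIntegral.integral_hasDerivAt_right (hgint 0 x)
      (hgc.stronglyMeasurableAtFilter _ _) hgc.continuousAt
  have hGc : Continuous G := by
    rw [continuous_iff_continuousAt]; exact fun x => (hGd x).continuousAt
  have hG0 : G 0 = 0 := by rw [hG]; simp
  have hGsub : ∀ a b : ℝ, G b - G a = ∫ s in a..b, g s := by
    intro a b
    rw [hG, hG, intervalIntegral.integral_interval_sub_left (hgint 0 b) (hgint 0 a)]
  have hGpos : ∀ x : ℝ, x ≠ 0 → 0 < G x := by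
    intro x hx
    rcases hx.lt_or_gt with h | h
    · have : (0:ℝ) < ∫ s in x..(0:ℝ), (fun t => -g t) s := by
        refine intervalIntegral_pos_of_pos_on ((hgint x 0).neg) ?_ h
        intro t ht
        simpa using hgneg t ht.2
      have h2 : (∫ s in x..(0:ℝ), -g s) = -∫ s in x..(0:ℝ), g s := by
        simp [intervalIntegral.integral_neg]
      have h3 := hGsub x 0
      rw [hG0] at h3
      rw [h2] at this
      linarith
    · have : (0:ℝ) < ∫ s in (0:ℝ)..x, g s := by
        refine intervalIntegral_pos_of_pos_on (hgint 0 x) ?_ h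
        intro t ht
        exact hgpos t ht.1
      rw [← hG x] at this
      exact this
  have hGnn : ∀ x : ℝ, 0 ≤ G x := by
    intro x
    rcases eq_or_ne x 0 with rfl | h
    · exact hG0.ge
    · exact (hGpos x h).le
  have hα0 : α 0 = 0 := by rw [hα]; simp [Real.sign_zero]
  have hαpos' : ∀ x : ℝ, 0 ≤ x → α x = Real.sqrt (2 * G x) := by
    intro x hx
    rcases hx.lt_or_eq with h | rfl
    · rw [hα, Real.sign_of_pos h, one_mul]
    · rw [hα0, hG0]; simp
  have hαneg' : ∀ x : ℝ, x ≤ 0 → α x = -Real.sqrt (2 * G x) := by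
    intro x hx
    rcases hx.lt_or_eq with h | rfl
    · rw [hα, Real.sign_of_neg h]; ring
    · rw [hα0, hG0]; simp
  have hαmono : StrictMono α := by
    apply StrictMonoOn.Iic_union_Ici (a := 0)
    · intro a ha b hb hab
      rw [Set.mem_Iic] at ha hb
      rw [hαneg' a ha, hαneg' b hb, neg_lt_neg_iff]
      apply Real.sqrt_lt_sqrt (by linarith [hGnn b])
      have hib : (∫ s in a..b, g s) < 0 := by
        have : (0:ℝ) < ∫ s in a..b, (fun t => -g t) s := by
          refine intervalIntegral_pos_of_pos_on ((hgint a b).neg) ?_ hab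
          intro t ht
          simpa using hgneg t (lt_of_lt_of_le ht.2 hb)
        have h2 : (∫ s in a..b, -g s) = -∫ s in a..b, g s := by
          simp [intervalIntegral.integral_neg]
        rw [h2] at this; linarith
      have := hGsub a b
      linarith
    · intro a ha b hb hab
      rw [Set.mem_Ici] at ha hb
      rw [hαpos' a ha, hαpos' b hb]
      apply Real.sqrt_lt_sqrt (by linarith [hGnn a])
      have hib : (0:ℝ) < ∫ s in a..b, g s := by
        refine intervalIntegral_pos_of_pos_on (hgint a b) ?_ hab
        intro t ht
        exact hgpos t (lt_of_le_of_lt ha ht.1)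
      have := hGsub a b
      linarith
  have hαd : ∀ x : ℝ, x ≠ 0 → HasDerivAt α (Real.sign x * g x / Real.sqrt (2 * G x)) x := by
    intro x hx
    have h2G : HasDerivAt (fun y => 2 * G y) (2 * g x) x := (hGd x).const_mul 2
    have hGx : (0:ℝ) < 2 * G x := by linarith [hGpos x hx]
    have hs : HasDerivAt (fun y => Real.sqrt (2 * G y))
        (2 * g x / (2 * Real.sqrt (2 * G x))) x := h2G.sqrt hGx.ne'
    have hsq : (0:ℝ) < Real.sqrt (2 * G x) := Real.sqrt_pos.2 hGx
    rcases hx.lt_or_gt with h | h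
    · have hev : α =ᶠ[nhds x] (fun y => -Real.sqrt (2 * G y)) := by
        filter_upwards [Iio_mem_nhds h] with y hy
        exact hαneg' y (le_of_lt hy)
      have := (hs.neg).congr_of_eventuallyEq hev
      refine this.congr_deriv (Eq.symm ?_)
      rw [Real.sign_of_neg h]
      field_simp
    · have hev : α =ᶠ[nhds x] (fun y => Real.sqrt (2 * G y)) := by
        filter_upwards [Ioi_mem_nhds h] with y hy
        exact hαpos' y (le_of_lt hy)
      have := hs.congr_of_eventuallyEq hev
      refine this.congr_deriv (Eq.symm ?_)
      rw [Real.sign_of_pos h]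
      field_simp
  have hαc : Continuous α := by
    rw [continuous_iff_continuousAt]
    intro x
    rcases eq_or_ne x 0 with rfl | hx
    · have hsc : Continuous (fun y => Real.sqrt (2 * G y)) :=
        (continuous_const.mul hGc).sqrt
      have hs0 : Tendsto (fun y => Real.sqrt (2 * G y)) (nhds 0) (nhds 0) := by
        have := hsc.tendsto 0
        simpa [hG0] using this
      rw [ContinuousAt, hα0]
      refine tendsto_of_tendsto_of_tendsto_of_le_of_le (g := fun y => -Real.sqrt (2 * G y))
        (h := fun y => Real.sqrt (2 * G y)) (by simpa using hs0.neg) hs0 ?_ ?_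
      · intro y
        show -Real.sqrt (2 * G y) ≤ α y
        rcases lt_trichotomy y 0 with h | rfl | h
        · rw [hαneg' y h.le]
        · rw [hα0]; simp [Real.sqrt_nonneg]
        · rw [hαpos' y h.le]
          have := Real.sqrt_nonneg (2 * G y); linarith
      · intro y
        show α y ≤ Real.sqrt (2 * G y)
        rcases lt_trichotomy y 0 with h | rfl | h
        · rw [hαneg' y h.le]
          have := Real.sqrt_nonneg (2 * G y); linarith
        · rw [hα0]; simp [Real.sqrt_nonneg]
        · rw [hαpos' y h.le]
    · exact (hαd x hx).continuousAt
  have hrange : ∀ a b y : ℝ, a ≤ b → α a ≤ y → y ≤ α b → y ∈ Set.range α := by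
    intro a b y hab h1 h2
    have := intermediate_value_Icc hab hαc.continuousOn (⟨h1, h2⟩ : y ∈ Set.Icc (α a) (α b))
    exact (Set.image_subset_range α _) this
  have hβcont : ∀ x : ℝ, ContinuousAt β (α x) := by
    intro x
    rw [ContinuousAt, hβα x]
    rw [tendsto_order]
    constructor
    · intro b hb
      set c := max b (x - 1) with hc
      have hcx : c < x := max_lt hb (by linarith)
      filter_upwards [Ioo_mem_nhds (hαmono hcx) (hαmono (lt_add_one x))] with y hy
      have hyr : y ∈ Set.range α := hrange c (x + 1) y (by linarith) hy.1.le hy.2.le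
      have h1 : α c < α (β y) := by rw [hαβ y hyr]; exact hy.1
      exact lt_of_le_of_lt (le_max_left b _) (hαmono.lt_iff_lt.1 h1)
    · intro b hb
      set c := min b (x + 1) with hc
      have hcx : x < c := lt_min hb (by linarith)
      filter_upwards [Ioo_mem_nhds (hαmono (by linarith : x - 1 < x)) (hαmono hcx)] with y hy
      have hyr : y ∈ Set.range α := hrange (x - 1) c y (by linarith) hy.1.le hy.2.le
      have h1 : α (β y) < α c := by rw [hαβ y hyr]; exact hy.2
      exact lt_of_lt_of_le (hαmono.lt_iff_lt.1 h1) (min_le_left b _)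
  have hgne : ∀ x : ℝ, x ≠ 0 → g x ≠ 0 := by
    intro x hx
    rcases hx.lt_or_gt with h | h
    · exact (hgneg x h).ne
    · exact (hgpos x h).ne'
  refine ⟨?_, ?_, Real.sqrt_pos.2 hg0⟩
  · rintro u ⟨x, rfl⟩ hu
    have hx0 : x ≠ 0 := by rintro rfl; exact hu hα0
    have hβu : β (α x) = x := hβα x
    have hGx : (0:ℝ) < 2 * G x := by linarith [hGpos x hx0]
    have hsq : (0:ℝ) < Real.sqrt (2 * G x) := Real.sqrt_pos.2 hGx
    have hd : HasDerivAt α (Real.sign x * g x / Real.sqrt (2 * G x)) (β (α x)) := by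
      rw [hβu]; exact hαd x hx0
    have hne : Real.sign x * g x / Real.sqrt (2 * G x) ≠ 0 := by
      rcases hx0.lt_or_gt with h | h
      · rw [Real.sign_of_neg h]
        have := hgneg x h
        apply div_ne_zero _ hsq.ne'
        nlinarith
      · rw [Real.sign_of_pos h]
        have := hgpos x h
        apply div_ne_zero _ hsq.ne'
        nlinarith
    have hfg : ∀ᶠ y in nhds (α x), α (β y) = y := by
      filter_upwards [Ioo_mem_nhds (hαmono (by linarith : x - 1 < x))
        (hαmono (lt_add_one x))] with y hy
      exact hαβ y (hrange (x - 1) (x + 1) y (by linarith) hy.1.le hy.2.le)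
    have key := hd.of_local_left_inverse (hβcont x) hne hfg
    have hval : (Real.sign x * g x / Real.sqrt (2 * G x))⁻¹ = α x / g (β (α x)) := by
      rw [hβu, hα]
      rcases hx0.lt_or_gt with h | h
      · rw [Real.sign_of_neg h]
        field_simp [hgne x hx0]
      · rw [Real.sign_of_pos h]
        field_simp [hgne x hx0]
    rw [hval] at key
    exact key
  · have hgderiv : HasDerivAt g (deriv g 0) 0 := ((hg.differentiable one_ne_zero) 0).hasDerivAt
    have hslope : Tendsto (fun x : ℝ => g x / x) (nhdsWithin 0 {(0:ℝ)}ᶜ)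
        (nhds (deriv g 0)) := by
      have h := hasDerivAt_iff_tendsto_slope.mp hgderiv
      refine h.congr ?_
      intro x
      simp [slope_def_field, hg00]
    have hGG : Tendsto (fun x : ℝ => 2 * G x / x ^ 2) (nhdsWithin 0 {(0:ℝ)}ᶜ)
        (nhds (deriv g 0)) := by
      apply HasDerivAt.lhopital_zero_nhdsNE (f' := fun x => 2 * g x) (g' := fun x : ℝ => 2 * x)
      · filter_upwards with x
        exact (hGd x).const_mul 2
      · filter_upwards with x
        simpa using hasDerivAt_pow 2 x
      · filter_upwards [self_mem_nhdsWithin] with x hx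
        have hx' : x ≠ 0 := hx
        simpa using hx'
      · have h : Tendsto (fun x => 2 * G x) (nhds 0) (nhds 0) := by
          have h0 := (hGc.tendsto (0:ℝ)).const_mul (2:ℝ)
          rw [hG0, mul_zero] at h0
          exact h0
        exact h.mono_left nhdsWithin_le_nhds
      · have h : Tendsto (fun x : ℝ => x ^ 2) (nhds 0) (nhds 0) := by
          simpa using (continuous_pow 2).tendsto (0:ℝ)
        exact h.mono_left nhdsWithin_le_nhds
      · refine hslope.congr' ?_
        filter_upwards [self_mem_nhdsWithin] with x hx
        have hx' : x ≠ 0 := hx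
        rw [mul_div_mul_left _ _ (two_ne_zero)]
    have hinv : Tendsto (fun x : ℝ => x ^ 2 / (2 * G x)) (nhdsWithin 0 {(0:ℝ)}ᶜ)
        (nhds (deriv g 0)⁻¹) := by
      have h := hGG.inv₀ (ne_of_gt hg0)
      refine h.congr ?_
      intro x
      rw [inv_div]
    have hsqrtinv : Tendsto (fun x : ℝ => Real.sqrt (x ^ 2 / (2 * G x)))
        (nhdsWithin 0 {(0:ℝ)}ᶜ) (nhds (Real.sqrt (deriv g 0)⁻¹)) :=
      (Real.continuous_sqrt.tendsto _).comp hinv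
    have hφ : Tendsto (fun x : ℝ => Real.sign x * g x / Real.sqrt (2 * G x))
        (nhdsWithin 0 {(0:ℝ)}ᶜ) (nhds (Real.sqrt (deriv g 0))) := by
      have hmul := hslope.mul hsqrtinv
      have hval : deriv g 0 * Real.sqrt (deriv g 0)⁻¹ = Real.sqrt (deriv g 0) := by
        rw [Real.sqrt_inv]
        have h1 : Real.sqrt (deriv g 0) * Real.sqrt (deriv g 0) = deriv g 0 :=
          Real.mul_self_sqrt hg0.le
        have h2 : Real.sqrt (deriv g 0) ≠ 0 := (Real.sqrt_pos.2 hg0).ne'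
        field_simp
        rw [Real.sq_sqrt hg0.le]
      rw [hval] at hmul
      refine hmul.congr' ?_
      filter_upwards [self_mem_nhdsWithin] with x hx
      have hx' : x ≠ 0 := hx
      have hGx : (0:ℝ) < 2 * G x := by linarith [hGpos x hx']
      have hs : (0:ℝ) < Real.sqrt (2 * G x) := Real.sqrt_pos.2 hGx
      rw [Real.sqrt_div (sq_nonneg x), Real.sqrt_sq_eq_abs]
      have hxx : g x / x * (x / Real.sqrt (2 * G x)) = g x / Real.sqrt (2 * G x) := by
        rw [div_mul_div_comm, mul_comm (g x) x, mul_div_mul_left _ _ hx']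
      rcases hx'.lt_or_gt with h | h
      · rw [Real.sign_of_neg h, abs_of_neg h, neg_div, mul_neg, hxx, neg_one_mul, neg_div]
      · rw [Real.sign_of_pos h, abs_of_pos h, hxx, one_mul]
    have hrange0 : ∀ᶠ u in nhds (0:ℝ), u ∈ Set.range α := by
      have h1 : α (-1) < 0 := by rw [← hα0]; exact hαmono (by norm_num)
      have h2 : (0:ℝ) < α 1 := by rw [← hα0]; exact hαmono (by norm_num)
      filter_upwards [Ioo_mem_nhds h1 h2] with u hu
      exact hrange (-1) 1 u (by norm_num) hu.1.le hu.2.le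
    have hb0 : β 0 = 0 := by have := hβα 0; rwa [hα0] at this
    have hβtend : Tendsto β (nhdsWithin 0 {(0:ℝ)}ᶜ) (nhdsWithin 0 {(0:ℝ)}ᶜ) := by
      rw [tendsto_nhdsWithin_iff]
      constructor
      · have hc := hβcont 0
        rw [hα0] at hc
        rw [ContinuousAt, hb0] at hc
        exact hc.mono_left nhdsWithin_le_nhds
      · filter_upwards [eventually_nhdsWithin_of_eventually_nhds hrange0,
          self_mem_nhdsWithin] with u hu1 hu2
        intro hcon
        have : α (β u) = u := hαβ u hu1
        rw [(by exact hcon : β u = (0:ℝ)), hα0] at this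
        exact hu2 this.symm
    have hcomp := hφ.comp hβtend
    refine hcomp.congr' ?_
    filter_upwards [eventually_nhdsWithin_of_eventually_nhds hrange0,
      self_mem_nhdsWithin] with u hu1 hu2
    have hu' : α (β u) = u := hαβ u hu1
    have hx0 : β u ≠ 0 := by
      intro hcon
      rw [hcon, hα0] at hu'
      exact (show u ≠ 0 from hu2) hu'.symm
    have hGx : (0:ℝ) < 2 * G (β u) := by linarith [hGpos (β u) hx0]
    have hs : (0:ℝ) < Real.sqrt (2 * G (β u)) := Real.sqrt_pos.2 hGx
    show Real.sign (β u) * g (β u) / Real.sqrt (2 * G (β u)) = g (β u) / u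
    set x := β u with hxdef
    rw [← hu', hα]
    rcases hx0.lt_or_gt with h | h
    · rw [Real.sign_of_neg h, neg_one_mul, neg_one_mul, neg_div, div_neg]
    · rw [Real.sign_of_pos h, one_mul, one_mul]
end
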